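/- Let t be a rational number, V a vector space over ℚ, and f : V × V × V × V → ℚ a map that is linear in each argument and invariant under every permutation of its four arguments. Let H, δ ∈ V and assume that for all a, b ∈ ℚ one has f(aH + bδ, aH + bδ, aH + bδ, aH + bδ) = 3·(2t·a² − 2·b²)². If a rational number α' satisfies α' + 2·(6t) = 2·f(δ, H − δ, H − δ, H − δ), then α' = 12(t − 2). -/
import Mathlib


/-- Computational core of the degree of the tangent variety of a generic K3:
if `α' + 2·(6t) = 2δ·(H−δ)³` (the latter computed via the Fujiki relation,
modeled by a symmetric 4-multilinear form `f`), then `α' = 12(t−2)`. -/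
theorem stmt_3 (t : ℚ) (V : Type*) [AddCommGroup V] [Module ℚ V]
    (f : MultilinearMap ℚ (fun _ : Fin 4 => V) ℚ)
    (hsymm : ∀ (σ : Equiv.Perm (Fin 4)) (v : Fin 4 → V), f (v ∘ σ) = f v)
    (H δ : V)
    (hdiag : ∀ a b : ℚ,
      f (fun _ => a • H + b • δ) = 3 * (2 * t * a ^ 2 - 2 * b ^ 2) ^ 2)
    (α' : ℚ)
    (hα' : α' + 2 * (6 * t) = 2 * f ![δ, H - δ, H - δ, H - δ]) :
    α' = 12 * (t - 2) := by
  have upd0 : ∀ (x y z w u : V), Function.update ![x,y,z,w] 0 u = ![u,y,z,w] := by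
    intro x y z w u; funext i; fin_cases i <;> simp [Function.update]
  have upd1 : ∀ (x y z w u : V), Function.update ![x,y,z,w] 1 u = ![x,u,z,w] := by
    intro x y z w u; funext i; fin_cases i <;> simp [Function.update]
  have upd2 : ∀ (x y z w u : V), Function.update ![x,y,z,w] 2 u = ![x,y,u,w] := by
    intro x y z w u; funext i; fin_cases i <;> simp [Function.update]
  have upd3 : ∀ (x y z w u : V), Function.update ![x,y,z,w] 3 u = ![x,y,z,u] := by
    intro x y z w u; funext i; fin_cases i <;> simp [Function.update]
  have lin0 : ∀ (c d : ℚ) (u v y z w : V),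
      f ![c•u + d•v, y, z, w] = c * f ![u,y,z,w] + d * f ![v,y,z,w] := by
    intro c d u v y z w
    rw [← upd0 u y z w (c•u + d•v), f.map_update_add, f.map_update_smul,
      f.map_update_smul, upd0, upd0]
    simp
  have lin1 : ∀ (c d : ℚ) (u v y z w : V),
      f ![y, c•u + d•v, z, w] = c * f ![y,u,z,w] + d * f ![y,v,z,w] := by
    intro c d u v y z w
    rw [← upd1 y u z w (c•u + d•v), f.map_update_add, f.map_update_smul,
      f.map_update_smul, upd1, upd1]
    simp
  have lin2 : ∀ (c d : ℚ) (u v y z w : V),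
      f ![y, z, c•u + d•v, w] = c * f ![y,z,u,w] + d * f ![y,z,v,w] := by
    intro c d u v y z w
    rw [← upd2 y z u w (c•u + d•v), f.map_update_add, f.map_update_smul,
      f.map_update_smul, upd2, upd2]
    simp
  have lin3 : ∀ (c d : ℚ) (u v y z w : V),
      f ![y, z, w, c•u + d•v] = c * f ![y,z,w,u] + d * f ![y,z,w,v] := by
    intro c d u v y z w
    rw [← upd3 y z w u (c•u + d•v), f.map_update_add, f.map_update_smul,
      f.map_update_smul, upd3, upd3]
    simp
  have pairEq : ∀ (v w : Fin 4 → V) (σ : Equiv.Perm (Fin 4)), v ∘ σ = w → f w = f v := by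
    intro v w σ h
    rw [← h, hsymm]
  set P : V := H - δ with hP
  set Q : V := δ with hQ
  -- symmetry collapses
  have s1 : f ![P,Q,P,P] = f ![Q,P,P,P] :=
    pairEq _ _ (Equiv.swap 0 1) (by funext i; fin_cases i <;> simp [Equiv.swap_apply_def])
  have s2 : f ![P,P,Q,P] = f ![Q,P,P,P] :=
    pairEq _ _ (Equiv.swap 0 2) (by funext i; fin_cases i <;> simp [Equiv.swap_apply_def])
  have s3 : f ![P,P,P,Q] = f ![Q,P,P,P] :=
    pairEq _ _ (Equiv.swap 0 3) (by funext i; fin_cases i <;> simp [Equiv.swap_apply_def])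
  have s4 : f ![Q,P,Q,P] = f ![Q,Q,P,P] :=
    pairEq _ _ (Equiv.swap 1 2) (by funext i; fin_cases i <;> simp [Equiv.swap_apply_def])
  have s5 : f ![Q,P,P,Q] = f ![Q,Q,P,P] :=
    pairEq _ _ (Equiv.swap 1 3) (by funext i; fin_cases i <;> simp [Equiv.swap_apply_def])
  have s6 : f ![P,Q,Q,P] = f ![Q,Q,P,P] :=
    pairEq _ _ (Equiv.swap 0 2) (by funext i; fin_cases i <;> simp [Equiv.swap_apply_def])
  have s7 : f ![P,Q,P,Q] = f ![Q,Q,P,P] :=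
    pairEq _ _ (Equiv.swap 0 3) (by funext i; fin_cases i <;> simp [Equiv.swap_apply_def])
  have s8 : f ![P,P,Q,Q] = f ![Q,Q,P,P] :=
    pairEq _ _ (Equiv.swap 0 2 * Equiv.swap 1 3)
      (by funext i; fin_cases i <;> simp [Equiv.swap_apply_def, Equiv.Perm.mul_apply])
  have s9 : f ![Q,Q,P,Q] = f ![Q,Q,Q,P] :=
    pairEq _ _ (Equiv.swap 2 3) (by funext i; fin_cases i <;> simp [Equiv.swap_apply_def])
  have s10 : f ![Q,P,Q,Q] = f ![Q,Q,Q,P] :=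
    pairEq _ _ (Equiv.swap 1 3) (by funext i; fin_cases i <;> simp [Equiv.swap_apply_def])
  have s11 : f ![P,Q,Q,Q] = f ![Q,Q,Q,P] :=
    pairEq _ _ (Equiv.swap 0 3) (by funext i; fin_cases i <;> simp [Equiv.swap_apply_def])
  have key : ∀ c d : ℚ,
      c^4 * f ![P,P,P,P] + 4*c^3*d * f ![Q,P,P,P] + 6*c^2*d^2 * f ![Q,Q,P,P]
        + 4*c*d^3 * f ![Q,Q,Q,P] + d^4 * f ![Q,Q,Q,Q]
        = 3 * (2*t*c^2 - 2*(d-c)^2)^2 := by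
    intro c d
    have hd : f ![c•P + d•Q, c•P + d•Q, c•P + d•Q, c•P + d•Q]
        = 3 * (2*t*c^2 - 2*(d-c)^2)^2 := by
      have hv : (![c•P + d•Q, c•P + d•Q, c•P + d•Q, c•P + d•Q] : Fin 4 → V)
          = (fun _ => c • H + (d - c) • δ) := by
        funext i
        have : c•P + d•Q = c • H + (d - c) • δ := by rw [hP, hQ]; module
        fin_cases i <;> simpa using this
      rw [hv, hdiag]
    simp only [lin0, lin1, lin2, lin3] at hd
    rw [s1, s2, s3, s4, s5, s6, s7, s8, s9, s10, s11] at hd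
    linear_combination hd
  have h1 := key 1 0
  have h2 := key 0 1
  have h3 := key 1 1
  have h4 := key 1 (-1)
  have h5 := key 2 1
  have hB : f ![Q,P,P,P] = 12*t - 12 := by
    linear_combination (-3*h3 - h4 + h5 - 12*h1 + 3*h2) / 24
  have hα2 : α' + 2 * (6 * t) = 2 * f ![Q,P,P,P] := hα'
  rw [hB] at hα2
  linarith
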